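/- Let G be a finite simple graph with positive real vertex weights ω, and let u, v be vertices forming a u-v-funnel (i.e., u ∈ N(v) and N(v) \ {u} is a clique in G). If ω(v) ≥ ω(x) for every x ∈ N(v) \ {u}, then α_ω(G) = max( ω(u) + α_ω(G − N[u]), ω(v) + α_ω(G − N[v]) ). -/

import Mathlib

open scoped Classical

/-- `S` is an independent set of vertices in `G`: no two members are adjacent. -/
def IsIndepSet {V : Type*} (G : SimpleGraph V) (S : Finset V) : Prop :=
  ∀ a ∈ S, ∀ b ∈ S, ¬ G.Adj a b

/-- The maximum total `w`-weight of an independent set of `G` contained in `A`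
(the weighted independence number of the subgraph of `G` induced on `A`). -/
noncomputable def alphaOn {V : Type*} [Fintype V] (G : SimpleGraph V) (w : V → ℝ)
    (A : Set V) : ℝ :=
  sSup {x : ℝ | ∃ S : Finset V, ↑S ⊆ A ∧ IsIndepSet G S ∧ x = ∑ v ∈ S, w v}

/-- The maximum total `w`-weight of an independent set of `G`. -/
noncomputable def alpha {V : Type*} [Fintype V] (G : SimpleGraph V) (w : V → ℝ) : ℝ :=
  alphaOn G w Set.univ

/-- `S` is a maximum `w`-weight independent set of `G`. -/
def IsMWIS {V : Type*} [Fintype V] (G : SimpleGraph V) (w : V → ℝ) (S : Finset V) : Prop :=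
  IsIndepSet G S ∧ ∑ v ∈ S, w v = alpha G w

/-- The closed neighborhood `N[v]` of a vertex. -/
def closedNbhd {V : Type*} (G : SimpleGraph V) (v : V) : Set V :=
  insert v (G.neighborSet v)

/-- The open neighborhood `N(S)` of a set of vertices. -/
def setNbhd {V : Type*} (G : SimpleGraph V) (S : Set V) : Set V :=
  (⋃ s ∈ S, G.neighborSet s) \ S

/-- The closed neighborhood `N[S]` of a set of vertices. -/
def closedSetNbhd {V : Type*} (G : SimpleGraph V) (S : Set V) : Set V :=
  setNbhd G S ∪ S

section Helpers

variable {V : Type*} [Fintype V] (G : SimpleGraph V) (w : V → ℝ)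

lemma valSet_finite (A : Set V) :
    {x : ℝ | ∃ S : Finset V, ↑S ⊆ A ∧ IsIndepSet G S ∧ x = ∑ v ∈ S, w v}.Finite := by
  apply (Set.finite_range (fun S : Finset V => ∑ v ∈ S, w v)).subset
  rintro x ⟨S, -, -, rfl⟩
  exact ⟨S, rfl⟩

lemma valSet_nonempty (A : Set V) :
    {x : ℝ | ∃ S : Finset V, ↑S ⊆ A ∧ IsIndepSet G S ∧ x = ∑ v ∈ S, w v}.Nonempty :=
  ⟨0, ∅, by simp, fun a ha => absurd ha (by simp), by simp⟩

lemma le_alphaOn {A : Set V} {S : Finset V} (hS : ↑S ⊆ A) (hind : IsIndepSet G S) :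
    ∑ v ∈ S, w v ≤ alphaOn G w A :=
  le_csSup (valSet_finite G w A).bddAbove ⟨S, hS, hind, rfl⟩

lemma exists_alphaOn (A : Set V) :
    ∃ S : Finset V, ↑S ⊆ A ∧ IsIndepSet G S ∧ ∑ v ∈ S, w v = alphaOn G w A := by
  obtain ⟨S, h1, h2, h3⟩ := (valSet_nonempty G w A).csSup_mem (valSet_finite G w A)
  exact ⟨S, h1, h2, h3.symm⟩

lemma indep_subset {S T : Finset V} (h : T ⊆ S) (hind : IsIndepSet G S) :
    IsIndepSet G T :=
  fun a ha b hb => hind a (h ha) b (h hb)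

end Helpers

theorem stmt_11 {V : Type*} [Fintype V] (G : SimpleGraph V) (w : V → ℝ)
    (hw : ∀ x, 0 < w x) (u v : V)
    (hu : u ∈ G.neighborSet v)
    (hclique : G.IsClique (G.neighborSet v \ {u}))
    (hwt : ∀ x ∈ G.neighborSet v \ {u}, w x ≤ w v) :
    alpha G w = max (w u + alphaOn G w (closedNbhd G u)ᶜ)
      (w v + alphaOn G w (closedNbhd G v)ᶜ) := by
  have key : ∀ y : V, ∀ S : Finset V, y ∉ S → ↑S ⊆ (closedNbhd G y)ᶜ → IsIndepSet G S →
      w y + ∑ x ∈ S, w x ≤ alpha G w := by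
    intro y S hyS hsub hind
    have hind' : IsIndepSet G (insert y S) := by
      intro a ha b hb
      simp only [Finset.mem_insert] at ha hb
      rcases ha with rfl | ha <;> rcases hb with rfl | hb
      · exact G.irrefl
      · exact fun h => (hsub hb) (Set.mem_insert_iff.mpr (Or.inr h))
      · exact fun h => (hsub ha) (Set.mem_insert_iff.mpr (Or.inr h.symm))
      · exact hind a ha b hb
    have h2 := le_alphaOn G w (A := Set.univ) (S := insert y S) (by simp) hind'
    rwa [Finset.sum_insert hyS] at h2
  apply le_antisymm
  · -- alpha ≤ max
    obtain ⟨S, -, hind, hsum⟩ := exists_alphaOn G w Set.univ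
    have halpha : alpha G w = ∑ x ∈ S, w x := hsum.symm
    by_cases huS : u ∈ S
    · refine le_trans ?_ (le_max_left _ _)
      rw [halpha, ← Finset.add_sum_erase S w huS]
      refine add_le_add le_rfl (le_alphaOn G w ?_ (indep_subset G (Finset.erase_subset _ _) hind))
      intro s hs
      simp only [Finset.coe_erase, Set.mem_diff, Finset.mem_coe, Set.mem_singleton_iff] at hs
      intro hmem
      rcases Set.mem_insert_iff.mp hmem with rfl | hadj
      · exact hs.2 rfl
      · exact hind u huS s hs.1 hadj
    · by_cases hvS : v ∈ S
      · refine le_trans ?_ (le_max_right _ _)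
        rw [halpha, ← Finset.add_sum_erase S w hvS]
        refine add_le_add le_rfl (le_alphaOn G w ?_ (indep_subset G (Finset.erase_subset _ _) hind))
        intro s hs
        simp only [Finset.coe_erase, Set.mem_diff, Finset.mem_coe, Set.mem_singleton_iff] at hs
        intro hmem
        rcases Set.mem_insert_iff.mp hmem with rfl | hadj
        · exact hs.2 rfl
        · exact hind v hvS s hs.1 hadj
      · by_cases hx : ∃ x ∈ S, G.Adj v x
        · obtain ⟨x, hxS, hvx⟩ := hx
          have hxu : x ≠ u := fun h => huS (h ▸ hxS)
          have hwx : w x ≤ w v := hwt x ⟨hvx, hxu⟩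
          refine le_trans ?_ (le_max_right _ _)
          have hsub : ↑(S.erase x) ⊆ (closedNbhd G v)ᶜ := by
            intro s hs
            simp only [Finset.coe_erase, Set.mem_diff, Finset.mem_coe,
              Set.mem_singleton_iff] at hs
            intro hmem
            rcases Set.mem_insert_iff.mp hmem with rfl | hadj
            · exact hvS hs.1
            · -- s ∈ N(v), s ≠ x : clique gives Adj s x, contradiction
              have hsu : s ≠ u := fun h => huS (h ▸ hs.1)
              exact hind s hs.1 x hxS (hclique ⟨hadj, hsu⟩ ⟨hvx, hxu⟩ hs.2)
          calc alpha G w = w x + ∑ s ∈ S.erase x, w s := by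
                rw [halpha, ← Finset.add_sum_erase S w hxS]
            _ ≤ w v + ∑ s ∈ S.erase x, w s := by linarith
            _ ≤ w v + alphaOn G w (closedNbhd G v)ᶜ :=
                add_le_add le_rfl
                  (le_alphaOn G w hsub (indep_subset G (Finset.erase_subset _ _) hind))
        · push_neg at hx
          exfalso
          have hsub : ↑S ⊆ (closedNbhd G v)ᶜ := by
            intro s hs
            intro hmem
            rcases Set.mem_insert_iff.mp hmem with rfl | hadj
            · exact hvS hs
            · exact hx s hs hadj
          have hk := key v S hvS hsub hind
          rw [hsum] at hk
          have heq : alpha G w = alphaOn G w Set.univ := rfl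
          rw [heq] at hk
          linarith [hw v]
  · -- max ≤ alpha
    apply max_le
    · obtain ⟨S, hsub, hind, hsum⟩ := exists_alphaOn G w (closedNbhd G u)ᶜ
      have huS : u ∉ S := fun h => (hsub h) (Set.mem_insert _ _)
      have := key u S huS hsub hind
      rwa [hsum] at this
    · obtain ⟨S, hsub, hind, hsum⟩ := exists_alphaOn G w (closedNbhd G v)ᶜ
      have hvS : v ∉ S := fun h => (hsub h) (Set.mem_insert _ _)
      have := key v S hvS hsub hind
      rwa [hsum] at this
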